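/- Let 𝒢 be a regular family containing all singletons and X_𝒢 the associated Schreier space. Then for any ε > 0 with ε < 1 being arbitrary, for every ordinal η and any F ∈ 𝒢^η (the η-th Cantor–Bendixson derivative of 𝒢), the functional Σ_{i∈F} eᵢ* lies in the η-th ε-Szlenk derivative s_ε^η(B_{X_𝒢*}). Consequently Sz(X_𝒢) ≥ CB(𝒢). -/

import Mathlib

open Ordinal

variable {X : Type*} [NormedAddCommGroup X] [NormedSpace ℝ X]

/-- The dual norm of a weak-star functional. -/
noncomputable def dualNorm (f : WeakDual ℝ X) : ℝ := ‖WeakDual.toStrongDual f‖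

/-- The `ε`-Szlenk derivative of a weak*-compact set `K ⊆ X*`: the points of `K` all of
whose weak*-neighborhoods meet `K` in a set of diameter `> ε`. -/
def szDeriv (ε : ℝ) (K : Set (WeakDual ℝ X)) : Set (WeakDual ℝ X) :=
  {f | f ∈ K ∧ ∀ v ∈ nhds f, ∃ g ∈ v ∩ K, ∃ h ∈ v ∩ K, ε < dualNorm (g - h)}

/-- Transfinite iterates of the `ε`-Szlenk derivative. -/
noncomputable def szIter (ε : ℝ) (K : Set (WeakDual ℝ X)) (ξ : Ordinal) :
    Set (WeakDual ℝ X) :=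
  Ordinal.limitRecOn ξ K (fun _ S => szDeriv ε S)
    (fun o _ ih => ⋂ (ζ : Ordinal) (h : ζ < o), ih ζ h)

/-- Identify a finite subset of `ℕ` with a point of the Cantor space `ℕ → Bool`. -/
def toCantor (F : Finset ℕ) : ℕ → Bool := fun n => decide (n ∈ F)

/-- Hereditary: closed under subsets. -/
def Hereditary (G : Set (Finset ℕ)) : Prop := ∀ ⦃E F : Finset ℕ⦄, E ⊆ F → F ∈ G → E ∈ G

/-- Spreading: closed under replacing elements by larger ones, keeping the
increasing order and the cardinality. -/
def Spreading (G : Set (Finset ℕ)) : Prop :=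
  ∀ (E : Finset ℕ) (f : ℕ → ℕ), StrictMonoOn f ↑E → (∀ n ∈ E, n ≤ f n) →
    E ∈ G → E.image f ∈ G

/-- Regular: compact (in the Cantor topology), hereditary and spreading. -/
def IsRegularFam (G : Set (Finset ℕ)) : Prop :=
  IsCompact (toCantor '' G) ∧ Hereditary G ∧ Spreading G

/-- The Cantor–Bendixson derivative. -/
def cbDeriv {α : Type*} [TopologicalSpace α] (K : Set α) : Set α :=
  {x | x ∈ K ∧ x ∈ closure (K \ {x})}

/-- Transfinite Cantor–Bendixson iterates. -/
noncomputable def cbIter {α : Type*} [TopologicalSpace α] (K : Set α) (ξ : Ordinal) : Set α :=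
  Ordinal.limitRecOn ξ K (fun _ S => cbDeriv S)
    (fun o _ ih => ⋂ (ζ : Ordinal) (h : ζ < o), ih ζ h)

/-! ### Auxiliary lemmas -/

lemma szIter_zero' (ε : ℝ) (K : Set (WeakDual ℝ X)) : szIter ε K 0 = K :=
  Ordinal.limitRecOn_zero _ _ _

lemma szIter_succ' (ε : ℝ) (K : Set (WeakDual ℝ X)) (o : Ordinal) :
    szIter ε K (Order.succ o) = szDeriv ε (szIter ε K o) :=
  Ordinal.limitRecOn_succ _ _ _ _

lemma szIter_limit' (ε : ℝ) (K : Set (WeakDual ℝ X)) (o : Ordinal) (ho : Order.IsSuccLimit o) :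
    szIter ε K o = ⋂ (ζ : Ordinal) (_ : ζ < o), szIter ε K ζ :=
  Ordinal.limitRecOn_limit _ _ _ _ ho

lemma cbIter_zero' {α : Type*} [TopologicalSpace α] (K : Set α) : cbIter K 0 = K :=
  Ordinal.limitRecOn_zero _ _ _

lemma cbIter_succ' {α : Type*} [TopologicalSpace α] (K : Set α) (o : Ordinal) :
    cbIter K (Order.succ o) = cbDeriv (cbIter K o) :=
  Ordinal.limitRecOn_succ _ _ _ _

lemma cbIter_limit' {α : Type*} [TopologicalSpace α] (K : Set α) (o : Ordinal)
    (ho : Order.IsSuccLimit o) : cbIter K o = ⋂ (ζ : Ordinal) (_ : ζ < o), cbIter K ζ :=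
  Ordinal.limitRecOn_limit _ _ _ _ ho

lemma cbIter_subset' {α : Type*} [TopologicalSpace α] (K : Set α) (ξ : Ordinal) :
    cbIter K ξ ⊆ K := by
  induction ξ using Ordinal.induction with
  | _ ξ IH =>
    rcases Ordinal.zero_or_succ_or_isSuccLimit ξ with rfl | ⟨o, rfl⟩ | hlim
    · rw [cbIter_zero']
    · rw [cbIter_succ']
      exact fun x hx => IH o (Order.lt_succ o) hx.1
    · rw [cbIter_limit' K ξ hlim]
      intro x hx
      simp only [Set.mem_iInter] at hx
      exact IH 0 hlim.pos (by rw [cbIter_zero'] at *; exact (cbIter_zero' K) ▸ hx 0 hlim.pos)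

lemma toCantor_injective' : Function.Injective toCantor := by
  intro F F' h
  ext n
  have := congrFun h n
  simpa [toCantor] using this

/-- Auxiliary: the main transfinite-induction statement, universe polymorphic. -/
lemma schreier_aux {X : Type*} [NormedAddCommGroup X] [NormedSpace ℝ X]
    [CompleteSpace X] (G : Set (Finset ℕ)) (hG : IsRegularFam G)
    (hsing : ∀ i : ℕ, ({i} : Finset ℕ) ∈ G)
    (e : ℕ → X) (f : ℕ → WeakDual ℝ X)
    (hbi : ∀ i j, f i (e j) = if i = j then 1 else 0)
    (hdense : Dense (Submodule.span ℝ (Set.range e) : Set X))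
    (hnorm : ∀ a : ℕ →₀ ℝ,
      ‖a.sum fun i c => c • e i‖ = sSup {r | ∃ F ∈ G, r = ∑ i ∈ F, |a i|}) :
    ∀ ε : ℝ, 0 < ε → ε < 1 → ∀ (η : Ordinal) (F : Finset ℕ),
      toCantor F ∈ cbIter (toCantor '' G) η →
      (∑ i ∈ F, f i) ∈ szIter ε {g : WeakDual ℝ X | dualNorm g ≤ 1} η := by
  classical
  obtain ⟨hcomp, hHer, hSpread⟩ := hG
  have hsum_apply : ∀ (E : Finset ℕ) (x : X), (∑ i ∈ E, f i) x = ∑ i ∈ E, f i x := by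
    intro E x
    induction E using Finset.cons_induction with
    | empty => rfl
    | cons i s hi ih => rw [Finset.sum_cons, Finset.sum_cons, ← ih]; rfl
  have heval : ∀ (a : ℕ →₀ ℝ) (i : ℕ), f i (a.sum fun j c => c • e j) = a i := by
    intro a i
    rw [map_finsuppSum]
    simp only [map_smul, _root_.smul_eq_mul, hbi]
    rw [Finsupp.sum]
    simp only [mul_ite, mul_one, mul_zero]
    rw [Finset.sum_ite_eq a.support i (fun j => a j)]
    by_cases h : i ∈ a.support
    · simp [h]
    · simp [h, Finsupp.notMem_support_iff.mp h]
  have hbdd : ∀ a : ℕ →₀ ℝ, BddAbove {r | ∃ F ∈ G, r = ∑ i ∈ F, |a i|} := by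
    intro a
    refine ⟨∑ i ∈ a.support, |a i|, ?_⟩
    rintro r ⟨F, hF, rfl⟩
    calc ∑ i ∈ F, |a i| ≤ ∑ i ∈ F ∪ a.support, |a i| :=
          Finset.sum_le_sum_of_subset_of_nonneg Finset.subset_union_left
            (fun _ _ _ => abs_nonneg _)
      _ = ∑ i ∈ a.support, |a i| := by
          refine (Finset.sum_subset Finset.subset_union_right ?_).symm
          intro i _ hi
          rw [Finsupp.notMem_support_iff.mp hi, abs_zero]
  have hnorm_ge : ∀ (a : ℕ →₀ ℝ) (F : Finset ℕ), F ∈ G →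
      ∑ i ∈ F, |a i| ≤ ‖a.sum fun i c => c • e i‖ := by
    intro a F hF
    rw [hnorm a]
    exact le_csSup (hbdd a) ⟨F, hF, rfl⟩
  have hfnorm : ∀ E : Finset ℕ, E ∈ G → ∀ x : X, |(∑ i ∈ E, f i) x| ≤ ‖x‖ := by
    intro E hE
    have hcl : IsClosed {x : X | |(∑ i ∈ E, f i) x| ≤ ‖x‖} :=
      isClosed_le ((map_continuous (∑ i ∈ E, f i)).abs) continuous_norm
    have hspan : (Submodule.span ℝ (Set.range e) : Set X) ⊆
        {x : X | |(∑ i ∈ E, f i) x| ≤ ‖x‖} := by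
      intro x hx
      obtain ⟨a, rfl⟩ := Finsupp.mem_span_range_iff_exists_finsupp.mp hx
      have h1 : (∑ i ∈ E, f i) (a.sum fun j c => c • e j) = ∑ i ∈ E, a i := by
        rw [hsum_apply]
        exact Finset.sum_congr rfl fun i _ => heval a i
      rw [Set.mem_setOf_eq, h1]
      calc |∑ i ∈ E, a i| ≤ ∑ i ∈ E, |a i| := Finset.abs_sum_le_sum_abs _ _
        _ ≤ _ := hnorm_ge a E hE
    intro x
    have hx : x ∈ closure (Submodule.span ℝ (Set.range e) : Set X) := by
      rw [hdense.closure_eq]; trivial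
    exact (hcl.closure_subset_iff.mpr hspan) hx
  have hfnorm1 : ∀ E : Finset ℕ, E ∈ G → dualNorm (∑ i ∈ E, f i) ≤ 1 := by
    intro E hE
    show ‖WeakDual.toStrongDual (∑ i ∈ E, f i)‖ ≤ 1
    refine ContinuousLinearMap.opNorm_le_bound _ zero_le_one fun x => ?_
    rw [one_mul]
    calc ‖WeakDual.toStrongDual (∑ i ∈ E, f i) x‖ = |(∑ i ∈ E, f i) x| := rfl
      _ ≤ ‖x‖ := hfnorm E hE x
  have hdn_apply : ∀ (g : WeakDual ℝ X) (x : X), |g x| ≤ dualNorm g * ‖x‖ := by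
    intro g x
    simpa [dualNorm] using (WeakDual.toStrongDual g).le_opNorm x
  have hdn_sub : ∀ g h : WeakDual ℝ X, dualNorm (g - h) ≤ dualNorm g + dualNorm h := by
    intro g h
    unfold dualNorm
    rw [map_sub]
    exact norm_sub_le _ _
  have he1 : ∀ i : ℕ, ‖e i‖ ≤ 1 := by
    intro i
    have hx : ((Finsupp.single i (1:ℝ)).sum fun j c => c • e j) = e i := by
      rw [Finsupp.sum_single_index (by rw [zero_smul]), one_smul]
    have h := hnorm (Finsupp.single i 1)
    rw [hx] at h
    rw [h]
    apply Real.sSup_le _ zero_le_one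
    rintro r ⟨F, hF, rfl⟩
    have : ∀ j ∈ F, |Finsupp.single i (1:ℝ) j| = if i = j then 1 else 0 := by
      intro j _
      rw [Finsupp.single_apply]
      split <;> simp
    rw [Finset.sum_congr rfl this, Finset.sum_ite_eq F i (fun _ => (1:ℝ))]
    split <;> norm_num
  have heval1 : ∀ (E : Finset ℕ) (i : ℕ), (∑ j ∈ E, f j) (e i) = if i ∈ E then 1 else 0 := by
    intro E i
    rw [hsum_apply]
    have : ∀ j ∈ E, f j (e i) = if i = j then (1:ℝ) else 0 := by
      intro j _
      rw [hbi j i]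
      by_cases h : i = j
      · rw [if_pos h.symm, if_pos h]
      · rw [if_neg (fun hh => h hh.symm), if_neg h]
    rw [Finset.sum_congr rfl this, Finset.sum_ite_eq E i (fun _ => (1:ℝ))]
  have hlow : ∀ F F' : Finset ℕ, F ≠ F' →
      (1:ℝ) ≤ dualNorm (∑ i ∈ F, f i - ∑ i ∈ F', f i) := by
    intro F F' hne
    have hex : ∃ i, (i ∈ F ∧ i ∉ F') ∨ (i ∈ F' ∧ i ∉ F) := by
      by_contra hc
      push_neg at hc
      exact hne (Finset.Subset.antisymm (fun i h => (hc i).1 h) (fun i h => (hc i).2 h))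
    obtain ⟨i, hi⟩ := hex
    have happ : |(∑ j ∈ F, f j - ∑ j ∈ F', f j) (e i)| = 1 := by
      have hsAp : (∑ j ∈ F, f j - ∑ j ∈ F', f j) (e i)
          = (∑ j ∈ F, f j) (e i) - (∑ j ∈ F', f j) (e i) := rfl
      rw [hsAp, heval1 F, heval1 F']
      rcases hi with ⟨h1, h2⟩ | ⟨h1, h2⟩ <;> simp [h1, h2]
    calc (1:ℝ) = |(∑ j ∈ F, f j - ∑ j ∈ F', f j) (e i)| := happ.symm
      _ ≤ dualNorm (∑ j ∈ F, f j - ∑ j ∈ F', f j) * ‖e i‖ := hdn_apply _ _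
      _ ≤ dualNorm (∑ j ∈ F, f j - ∑ j ∈ F', f j) * 1 :=
          mul_le_mul_of_nonneg_left (he1 i) (norm_nonneg _)
      _ = _ := mul_one _
  set inv : (ℕ → Bool) → Finset ℕ := fun σ =>
    if h : ∃ F : Finset ℕ, toCantor F = σ then h.choose else ∅ with hinv_def
  have hinv : ∀ F : Finset ℕ, inv (toCantor F) = F := by
    intro F
    have h : ∃ F' : Finset ℕ, toCantor F' = toCantor F := ⟨F, rfl⟩
    rw [hinv_def]
    simp only [dif_pos h]
    exact toCantor_injective' h.choose_spec
  set Φ : (ℕ → Bool) → WeakDual ℝ X := fun σ => ∑ i ∈ inv σ, f i with hΦ_def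
  have hΦval : ∀ F : Finset ℕ, Φ (toCantor F) = ∑ i ∈ F, f i := by
    intro F
    show (∑ i ∈ inv (toCantor F), f i) = ∑ i ∈ F, f i
    rw [hinv F]
  have hcont : ∀ F : Finset ℕ, F ∈ G →
      Filter.Tendsto Φ (nhdsWithin (toCantor F) (toCantor '' G)) (nhds (∑ i ∈ F, f i)) := by
    intro F hFG
    apply tendsto_iff_forall_eval_tendsto_topDualPairing.mpr
    intro x
    have hev : ∀ g : WeakDual ℝ X, topDualPairing ℝ X g x = g x := fun _ => rfl
    rw [Metric.tendsto_nhds]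
    intro δ hδ
    obtain ⟨y, hy, hyd⟩ : ∃ y ∈ (Submodule.span ℝ (Set.range e) : Set X), dist x y < δ/4 := by
      have := Metric.mem_closure_iff.mp (by rw [hdense.closure_eq]; trivial :
        x ∈ closure (Submodule.span ℝ (Set.range e) : Set X)) (δ/4) (by linarith)
      obtain ⟨y, hy1, hy2⟩ := this
      exact ⟨y, hy1, hy2⟩
    obtain ⟨a, rfl⟩ := Finsupp.mem_span_range_iff_exists_finsupp.mp hy
    set y := a.sum fun j c => c • e j with hy_def
    set N := (a.support.sup id) + 1 with hN_def
    have hsuppN : ∀ j ∈ a.support, j < N := by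
      intro j hj
      have : j ≤ a.support.sup id := Finset.le_sup (f := id) hj
      omega
    have hUopen : IsOpen {σ : ℕ → Bool | ∀ n < N, σ n = toCantor F n} := by
      have heq : {σ : ℕ → Bool | ∀ n < N, σ n = toCantor F n} =
          ⋂ n ∈ Finset.range N, (fun σ : ℕ → Bool => σ n) ⁻¹' {toCantor F n} := by
        ext σ
        simp [Finset.mem_range]
      rw [heq]
      exact isOpen_biInter_finset fun n _ =>
        (continuous_apply n).isOpen_preimage _ (isOpen_discrete _)
    have hU : {σ : ℕ → Bool | ∀ n < N, σ n = toCantor F n} ∈ nhds (toCantor F) :=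
      hUopen.mem_nhds (fun n _ => rfl)
    filter_upwards [mem_nhdsWithin_of_mem_nhds hU, self_mem_nhdsWithin] with σ hσ hσG
    obtain ⟨F', hF'G, rfl⟩ := hσG
    have hag : ∀ j < N, (j ∈ F' ↔ j ∈ F) := by
      intro j hj
      have := hσ j hj
      simpa [toCantor] using this
    have h1 : ∀ E : Finset ℕ, (∑ i ∈ E, f i) y = ∑ i ∈ E ∩ a.support, a i := by
      intro E
      rw [hy_def, hsum_apply]
      rw [Finset.sum_congr rfl fun i (_ : i ∈ E) => heval a i]
      refine (Finset.sum_subset Finset.inter_subset_left ?_).symm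
      intro i hiE hi
      exact Finsupp.notMem_support_iff.mp
        (fun hh => hi (Finset.mem_inter.mpr ⟨hiE, hh⟩))
    have hydiff : (∑ i ∈ F', f i) y - (∑ i ∈ F, f i) y = 0 := by
      rw [h1 F', h1 F]
      have hFa : F' ∩ a.support = F ∩ a.support := by
        ext j
        simp only [Finset.mem_inter]
        constructor
        · rintro ⟨h1', h2'⟩; exact ⟨(hag j (hsuppN j h2')).mp h1', h2'⟩
        · rintro ⟨h1', h2'⟩; exact ⟨(hag j (hsuppN j h2')).mpr h1', h2'⟩
      rw [hFa, _root_.sub_self]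
    have hd2 : dualNorm (∑ i ∈ F', f i - ∑ i ∈ F, f i) ≤ 2 := by
      calc dualNorm (∑ i ∈ F', f i - ∑ i ∈ F, f i)
          ≤ dualNorm (∑ i ∈ F', f i) + dualNorm (∑ i ∈ F, f i) := hdn_sub _ _
        _ ≤ 1 + 1 := add_le_add (hfnorm1 F' hF'G) (hfnorm1 F hFG)
        _ = 2 := by norm_num
    rw [hev, hev, hΦval F', Real.dist_eq]
    have hkey : (∑ i ∈ F', f i) x - (∑ i ∈ F, f i) x
        = (∑ i ∈ F', f i - ∑ i ∈ F, f i) (x - y) := by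
      have hs : (∑ i ∈ F', f i - ∑ i ∈ F, f i) (x - y)
          = (∑ i ∈ F', f i) (x - y) - (∑ i ∈ F, f i) (x - y) := rfl
      rw [hs, map_sub (∑ i ∈ F', f i) x y, map_sub (∑ i ∈ F, f i) x y]
      have := hydiff
      ring_nf
      ring_nf at this
      linarith
    rw [hkey]
    calc |(∑ i ∈ F', f i - ∑ i ∈ F, f i) (x - y)|
        ≤ dualNorm (∑ i ∈ F', f i - ∑ i ∈ F, f i) * ‖x - y‖ := hdn_apply _ _
      _ ≤ 2 * ‖x - y‖ := mul_le_mul_of_nonneg_right hd2 (norm_nonneg _)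
      _ < δ := by rw [← dist_eq_norm]; linarith
  set K : Set (WeakDual ℝ X) := {g : WeakDual ℝ X | dualNorm g ≤ 1} with hK_def
  set GG : Set (ℕ → Bool) := toCantor '' G with hGG_def
  have hmemG : ∀ {F : Finset ℕ}, toCantor F ∈ GG → F ∈ G := by
    intro F hF
    obtain ⟨F₀, hF₀, hFe⟩ := hF
    exact toCantor_injective' hFe ▸ hF₀
  intro ε hε hε1 η
  induction η using Ordinal.induction with
  | _ η IH =>
  rcases Ordinal.zero_or_succ_or_isSuccLimit η with rfl | ⟨o, rfl⟩ | hlim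
  · intro F hF
    rw [cbIter_zero'] at hF
    rw [szIter_zero']
    exact hfnorm1 F (hmemG hF)
  · intro F hF
    rw [cbIter_succ'] at hF
    rw [szIter_succ']
    obtain ⟨hFmem, hFcl⟩ := hF
    have hFG : F ∈ G := hmemG (cbIter_subset' GG o hFmem)
    refine ⟨IH o (Order.lt_succ o) F hFmem, ?_⟩
    intro v hv
    refine ⟨∑ i ∈ F, f i, ⟨mem_of_mem_nhds hv, IH o (Order.lt_succ o) F hFmem⟩, ?_⟩
    have hne : (nhdsWithin (toCantor F) (cbIter GG o \ {toCantor F})).NeBot :=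
      mem_closure_iff_nhdsWithin_neBot.mp hFcl
    have hsub : cbIter GG o \ {toCantor F} ⊆ GG :=
      fun σ hσ => cbIter_subset' GG o hσ.1
    have ht : Filter.Tendsto Φ (nhdsWithin (toCantor F) (cbIter GG o \ {toCantor F}))
        (nhds (∑ i ∈ F, f i)) :=
      (hcont F hFG).mono_left (nhdsWithin_mono _ hsub)
    have hv' : Φ ⁻¹' v ∈ nhdsWithin (toCantor F) (cbIter GG o \ {toCantor F}) := ht hv
    have hmem : (Φ ⁻¹' v ∩ (cbIter GG o \ {toCantor F})) ∈
        nhdsWithin (toCantor F) (cbIter GG o \ {toCantor F}) :=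
      Filter.inter_mem hv' self_mem_nhdsWithin
    obtain ⟨σ, hσv, hσA⟩ := Filter.nonempty_of_mem hmem
    obtain ⟨F', hF'G', rfl⟩ : σ ∈ GG := hsub hσA
    have hF'c : toCantor F' ∈ cbIter GG o := hσA.1
    have hF'ne : F' ≠ F := by
      intro hFF
      exact hσA.2 (by rw [hFF]; exact Set.mem_singleton _)
    refine ⟨Φ (toCantor F'), ⟨hσv, ?_⟩, ?_⟩
    · rw [hΦval F']
      exact IH o (Order.lt_succ o) F' hF'c
    · rw [hΦval F']
      calc ε < 1 := hε1
        _ ≤ dualNorm (∑ i ∈ F, f i - ∑ i ∈ F', f i) := hlow F F' (fun h => hF'ne h.symm)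
  · intro F hF
    rw [cbIter_limit' GG η hlim] at hF
    rw [szIter_limit' ε K η hlim]
    simp only [Set.mem_iInter] at hF ⊢
    intro ζ hζ
    exact IH ζ hζ F (hF ζ hζ)

/-- Let `𝒢` be a regular family containing all singletons and let `X` be (a realization
of) the Schreier space `X_𝒢`, with basis `e` and coordinate functionals `f`.  Then for
any `0 < ε < 1`, every ordinal `η` and every `F ∈ 𝒢^η`, the functional `Σ_{i∈F} eᵢ*`
lies in `s_ε^η(B_{X_𝒢^*})`; consequently `Sz(X_𝒢) ≥ CB(𝒢)`. -/
theorem schreier_space_szlenk {X : Type*} [NormedAddCommGroup X] [NormedSpace ℝ X]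
    [CompleteSpace X] (G : Set (Finset ℕ)) (hG : IsRegularFam G)
    (hsing : ∀ i : ℕ, ({i} : Finset ℕ) ∈ G)
    (e : ℕ → X) (f : ℕ → WeakDual ℝ X)
    (hbi : ∀ i j, f i (e j) = if i = j then 1 else 0)
    (hdense : Dense (Submodule.span ℝ (Set.range e) : Set X))
    (hnorm : ∀ a : ℕ →₀ ℝ,
      ‖a.sum fun i c => c • e i‖ = sSup {r | ∃ F ∈ G, r = ∑ i ∈ F, |a i|}) :
    (∀ ε : ℝ, 0 < ε → ε < 1 → ∀ (η : Ordinal) (F : Finset ℕ),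
      toCantor F ∈ cbIter (toCantor '' G) η →
      (∑ i ∈ F, f i) ∈ szIter ε {g : WeakDual ℝ X | dualNorm g ≤ 1} η) ∧
    (∀ ξ : Ordinal,
      (∀ ε : ℝ, 0 < ε → szIter ε {g : WeakDual ℝ X | dualNorm g ≤ 1} ξ = ∅) →
      cbIter (toCantor '' G) ξ = ∅) := by
  refine ⟨schreier_aux G hG hsing e f hbi hdense hnorm, ?_⟩
  intro ξ hξ
  by_contra hne
  obtain ⟨σ, hσ⟩ := Set.nonempty_iff_ne_empty.mpr hne
  obtain ⟨F, hFG, rfl⟩ : σ ∈ toCantor '' G := cbIter_subset' (toCantor '' G) ξ hσ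
  have := schreier_aux G hG hsing e f hbi hdense hnorm (1/2) (by norm_num) (by norm_num) ξ F hσ
  rw [hξ (1/2) (by norm_num)] at this
  exact this
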